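/- Suppose 0 < α < β, ε ∈ (0,1), x₀ = 1 - ε, and the laissez-faire peak exceeds γ (i.e., 1 + (α/β)ln(α/(β(1-ε))) - α/β > γ). Then the equation x* - (α/β)ln(x*) = 1 - γ - (α/β)ln(x₀) has a solution x* in [α/β, x₀], and the density f*(x) := 0 for x ≤ x*, f*(x) := -(1 - α/(βx)) / (γ - (x - x* - (α/β)ln(x/x*))) for x > x*, is the unique (up to null sets) minimizer of G over D_γ. -/

import Mathlib

set_option maxHeartbeats 1000000

open Set MeasureTheory intervalIntegral

lemma abs_exp_sub_exp (s t : ℝ) : |Real.exp s - Real.exp t| ≤ Real.exp (max s t) * |s - t| := by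
  wlog h : t ≤ s generalizing s t
  · rw [abs_sub_comm, max_comm, abs_sub_comm s t]; exact this t s (le_of_not_ge h)
  rw [abs_of_nonneg (sub_nonneg.2 (Real.exp_le_exp.2 h)), abs_of_nonneg (sub_nonneg.2 h),
    max_eq_left h]
  have h1 : Real.exp (t - s) * Real.exp s = Real.exp t := by rw [← Real.exp_add]; ring_nf
  nlinarith [Real.add_one_le_exp (t - s), Real.exp_pos s]

lemma abs_intervalIntegral_le {f : ℝ → ℝ} (hf : Integrable f) (p q : ℝ) :
    |∫ t in p..q, f t| ≤ ∫ t, |f t| := by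
  wlog h : p ≤ q generalizing p q
  · rw [integral_symm, abs_neg]; exact this q p (le_of_not_ge h)
  calc |∫ t in p..q, f t| ≤ ∫ t in p..q, |f t| := abs_integral_le_integral_abs h
    _ = ∫ t in Ioc p q, |f t| := integral_of_le h
    _ ≤ ∫ t, |f t| := setIntegral_le_integral hf.abs
        (Filter.Eventually.of_forall fun x => abs_nonneg _)

lemma ftc_exp' {f : ℝ → ℝ} {c d : ℝ} (hcd : c ≤ d) (hf : Integrable f) :
    ∫ x in c..d, f x * Real.exp (∫ t in c..x, f t) =
      Real.exp (∫ t in c..d, f t) - 1 := by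
  set N := ∫ t, |f t| with hN
  have hN0 : 0 ≤ N := integral_nonneg fun x => abs_nonneg _
  have hFbd : ∀ x, |∫ t in c..x, f t| ≤ N := fun x => abs_intervalIntegral_le hf c x
  have hFcont : Continuous fun x => ∫ t in c..x, f t :=
    continuous_primitive (fun a b => hf.intervalIntegrable) c
  have hexp_bd : ∀ x, ‖Real.exp (∫ t in c..x, f t)‖ ≤ Real.exp N := by
    intro x
    rw [Real.norm_eq_abs, abs_of_pos (Real.exp_pos _)]
    exact Real.exp_le_exp.2 ((le_abs_self _).trans (hFbd x))
  have hint : Integrable (fun x => f x * Real.exp (∫ t in c..x, f t)) := by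
    have := hf.bdd_mul ((Real.continuous_exp.comp hFcont).aestronglyMeasurable)
      (Filter.Eventually.of_forall hexp_bd)
    simpa [mul_comm] using this
  set K : ℝ := Real.exp (N + 1) * (N + 3) with hK
  have hKpos : 0 < K := by positivity
  have main : ∀ η : ℝ, 0 < η → η ≤ 1 →
      |(∫ x in c..d, f x * Real.exp (∫ t in c..x, f t)) -
        (Real.exp (∫ t in c..d, f t) - 1)| ≤ K * η := by
    intro η hη hη1
    obtain ⟨g, hgsupp, hgL1, hgcont, hgint⟩ :=
      hf.exists_hasCompactSupport_integral_sub_le hη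
    replace hgL1 : ∫ t, |f t - g t| ≤ η := by simpa [Real.norm_eq_abs] using hgL1
    set Gg : ℝ → ℝ := fun x => ∫ t in c..x, g t with hGg
    have hdiff : ∀ p q : ℝ, |(∫ t in p..q, f t) - ∫ t in p..q, g t| ≤ η := by
      intro p q
      rw [← intervalIntegral.integral_sub hf.intervalIntegrable hgint.intervalIntegrable]
      exact (abs_intervalIntegral_le (hf.sub hgint) p q).trans hgL1
    have hGgbd : ∀ x, |Gg x| ≤ N + η := by
      intro x
      have h1 := hdiff c x
      have h2 := hFbd x
      calc |Gg x| = |(∫ t in c..x, f t) - ((∫ t in c..x, f t) - Gg x)| := by ring_nf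
        _ ≤ |∫ t in c..x, f t| + |(∫ t in c..x, f t) - Gg x| := abs_sub _ _
        _ ≤ N + η := add_le_add h2 h1
    -- FTC for g
    have hftcg : ∫ x in c..d, g x * Real.exp (Gg x) = Real.exp (Gg d) - 1 := by
      have hG : ∀ x : ℝ, HasDerivAt Gg (g x) x := fun x =>
        intervalIntegral.integral_hasDerivAt_right hgint.intervalIntegrable
          (hgcont.stronglyMeasurable.stronglyMeasurableAtFilter) hgcont.continuousAt
      have hE : ∀ x : ℝ, HasDerivAt (fun u => Real.exp (Gg u))
          (g x * Real.exp (Gg x)) x := fun x => by simpa [mul_comm] using (hG x).exp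
      have hcontG : Continuous Gg :=
        continuous_primitive (fun a b => hgint.intervalIntegrable) c
      have := intervalIntegral.integral_eq_sub_of_hasDerivAt
        (f := fun u => Real.exp (Gg u)) (fun x _ => hE x)
        ((hgcont.mul (Real.continuous_exp.comp hcontG)).intervalIntegrable c d)
      simpa [hGg] using this
    -- pointwise mean value estimate on exponentials
    have hexpdiff : ∀ x, |Real.exp (∫ t in c..x, f t) - Real.exp (Gg x)| ≤
        Real.exp (N + 1) * η := by
      intro x
      have h1 := abs_exp_sub_exp (∫ t in c..x, f t) (Gg x)
      have h2 : max (∫ t in c..x, f t) (Gg x) ≤ N + 1 := by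
        rcases max_cases (∫ t in c..x, f t) (Gg x) with ⟨he, _⟩ | ⟨he, _⟩ <;> rw [he]
        · linarith [(le_abs_self _).trans (hFbd x)]
        · linarith [(le_abs_self _).trans (hGgbd x)]
      calc |Real.exp (∫ t in c..x, f t) - Real.exp (Gg x)|
          ≤ Real.exp (max (∫ t in c..x, f t) (Gg x)) * |(∫ t in c..x, f t) - Gg x| := h1
        _ ≤ Real.exp (N + 1) * η := by
            apply mul_le_mul (Real.exp_le_exp.2 h2) (hdiff c x) (abs_nonneg _)
              (Real.exp_pos _).le
    -- integrability of g * exp Gg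
    have hcontG : Continuous Gg := continuous_primitive (fun a b => hgint.intervalIntegrable) c
    have hGgexp_bd : ∀ x, ‖Real.exp (Gg x)‖ ≤ Real.exp (N + 1) := by
      intro x
      rw [Real.norm_eq_abs, abs_of_pos (Real.exp_pos _)]
      exact Real.exp_le_exp.2 (by linarith [(le_abs_self _).trans (hGgbd x)])
    have hintg : Integrable (fun x => g x * Real.exp (Gg x)) := by
      have := hgint.bdd_mul ((Real.continuous_exp.comp hcontG).aestronglyMeasurable)
        (Filter.Eventually.of_forall hGgexp_bd)
      simpa [mul_comm] using this
    -- difference of the two integrals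
    have hIdiff : |(∫ x in c..d, f x * Real.exp (∫ t in c..x, f t)) -
        ∫ x in c..d, g x * Real.exp (Gg x)| ≤
        Real.exp (N + 1) * η + (N + η) * (Real.exp (N + 1) * η) := by
      rw [← intervalIntegral.integral_sub hint.intervalIntegrable hintg.intervalIntegrable]
      have hbd : ∀ x, |f x * Real.exp (∫ t in c..x, f t) - g x * Real.exp (Gg x)| ≤
          |f x - g x| * Real.exp (N + 1) + |g x| * (Real.exp (N + 1) * η) := by
        intro x
        have expand : f x * Real.exp (∫ t in c..x, f t) - g x * Real.exp (Gg x) =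
            (f x - g x) * Real.exp (∫ t in c..x, f t) +
            g x * (Real.exp (∫ t in c..x, f t) - Real.exp (Gg x)) := by ring
        rw [expand]
        refine (abs_add_le _ _).trans (add_le_add ?_ ?_)
        · rw [abs_mul]
          refine mul_le_mul_of_nonneg_left ?_ (abs_nonneg _)
          rw [abs_of_pos (Real.exp_pos _)]
          exact Real.exp_le_exp.2 (by linarith [(le_abs_self _).trans (hFbd x)])
        · rw [abs_mul]
          exact mul_le_mul_of_nonneg_left (hexpdiff x) (abs_nonneg _)
      have hA : Integrable (fun x => |f x - g x| * Real.exp (N + 1)) := by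
        simpa using ((hf.sub hgint).abs).mul_const (Real.exp (N + 1))
      have hB : Integrable (fun x => |g x| * (Real.exp (N + 1) * η)) :=
        (hgint.abs).mul_const _
      have hBint : Integrable (fun x => |f x - g x| * Real.exp (N + 1) +
          |g x| * (Real.exp (N + 1) * η)) := hA.add hB
      calc |∫ x in c..d, (f x * Real.exp (∫ t in c..x, f t) - g x * Real.exp (Gg x))|
          ≤ ∫ x in c..d, |f x * Real.exp (∫ t in c..x, f t) - g x * Real.exp (Gg x)| :=
            abs_integral_le_integral_abs hcd
        _ = ∫ x in Ioc c d, |f x * Real.exp (∫ t in c..x, f t) - g x * Real.exp (Gg x)| :=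
            integral_of_le hcd
        _ ≤ ∫ x in Ioc c d, (|f x - g x| * Real.exp (N + 1) + |g x| * (Real.exp (N + 1) * η)) := by
            apply setIntegral_mono_on ((hint.sub hintg).abs.integrableOn)
              (hBint.integrableOn) measurableSet_Ioc
            intro x _
            exact hbd x
        _ ≤ ∫ x, (|f x - g x| * Real.exp (N + 1) + |g x| * (Real.exp (N + 1) * η)) :=
            setIntegral_le_integral hBint (Filter.Eventually.of_forall fun x => by positivity)
        _ = (∫ x, |f x - g x|) * Real.exp (N + 1) + (∫ x, |g x|) * (Real.exp (N + 1) * η) := by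
            rw [integral_add hA hB, MeasureTheory.integral_mul_const, MeasureTheory.integral_mul_const]
        _ ≤ η * Real.exp (N + 1) + (N + η) * (Real.exp (N + 1) * η) := by
            have hgN : ∫ x, |g x| ≤ N + η := by
              have : ∀ x, |g x| ≤ |f x - g x| + |f x| := fun x => by
                calc |g x| = |f x - (f x - g x)| := by ring_nf
                  _ ≤ |f x - g x| + |f x| := by
                      rw [abs_sub_comm (f x)]; exact (abs_sub _ _).trans (by rw [add_comm])
              calc ∫ x, |g x| ≤ ∫ x, (|f x - g x| + |f x|) :=
                    integral_mono hgint.abs ((hf.sub hgint).abs.add hf.abs) this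
                _ = (∫ x, |f x - g x|) + N := integral_add (hf.sub hgint).abs hf.abs
                _ ≤ η + N := by linarith
                _ = N + η := by ring
            have he := Real.exp_pos (N + 1)
            nlinarith [mul_le_mul_of_nonneg_right hgN (mul_pos he hη).le]
        _ = Real.exp (N + 1) * η + (N + η) * (Real.exp (N + 1) * η) := by ring
    -- final assembly
    have hfinal := hexpdiff d
    have h1 : |(∫ x in c..d, f x * Real.exp (∫ t in c..x, f t)) -
        (Real.exp (∫ t in c..d, f t) - 1)| ≤
        (Real.exp (N + 1) * η + (N + η) * (Real.exp (N + 1) * η)) + Real.exp (N + 1) * η := by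
      have : (∫ x in c..d, f x * Real.exp (∫ t in c..x, f t)) -
          (Real.exp (∫ t in c..d, f t) - 1) =
          ((∫ x in c..d, f x * Real.exp (∫ t in c..x, f t)) -
            ∫ x in c..d, g x * Real.exp (Gg x)) +
          ((Real.exp (Gg d)) - Real.exp (∫ t in c..d, f t)) := by
        rw [hftcg]; ring
      rw [this]
      refine (abs_add_le _ _).trans (add_le_add hIdiff ?_)
      rw [abs_sub_comm]; exact hfinal
    refine h1.trans ?_
    have he := (Real.exp_pos (N + 1)).le
    rw [hK]
    nlinarith [Real.exp_pos (N + 1), mul_le_mul_of_nonneg_left hη1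
      (mul_nonneg (mul_nonneg hη.le he) hη.le)]
  -- conclude
  by_contra hne
  have habs : 0 < |(∫ x in c..d, f x * Real.exp (∫ t in c..x, f t)) -
      (Real.exp (∫ t in c..d, f t) - 1)| := abs_pos.2 (sub_ne_zero.2 hne)
  set A := |(∫ x in c..d, f x * Real.exp (∫ t in c..x, f t)) -
      (Real.exp (∫ t in c..d, f t) - 1)|
  have hη : 0 < min 1 (A / (2 * K)) := lt_min one_pos (by positivity)
  have := main _ hη (min_le_left _ _)
  have h2 : K * min 1 (A / (2 * K)) ≤ K * (A / (2 * K)) :=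
    mul_le_mul_of_nonneg_left (min_le_right _ _) hKpos.le
  have h3 : K * (A / (2 * K)) = A / 2 := by field_simp
  linarith

lemma ftc_exp {f : ℝ → ℝ} {c d : ℝ} (hcd : c ≤ d) (hf : IntegrableOn f (Icc c d)) :
    ∫ x in c..d, f x * Real.exp (∫ t in c..x, f t) =
      Real.exp (∫ t in c..d, f t) - 1 := by
  set f' := (Icc c d).indicator f with hf'
  have hint : Integrable f' := (integrable_indicator_iff measurableSet_Icc).2 hf
  have heq : ∀ x ∈ Icc c d, (∫ t in c..x, f' t) = ∫ t in c..x, f t := by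
    intro x hx
    apply intervalIntegral.integral_congr
    intro t ht
    rw [uIcc_of_le hx.1] at ht
    have htm : t ∈ Icc c d := ⟨ht.1, ht.2.trans hx.2⟩
    rw [hf', indicator_of_mem htm]
  have h1 : ∫ x in c..d, f' x * Real.exp (∫ t in c..x, f' t) =
      ∫ x in c..d, f x * Real.exp (∫ t in c..x, f t) := by
    apply intervalIntegral.integral_congr
    intro x hx
    rw [uIcc_of_le hcd] at hx
    show f' x * Real.exp (∫ t in c..x, f' t) = f x * Real.exp (∫ t in c..x, f t)
    rw [heq x hx, hf', indicator_of_mem hx]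
  rw [← h1, ftc_exp' hcd hint, heq d (right_mem_Icc.2 hcd)]

lemma ftc_exp_sub {f : ℝ → ℝ} {a b c d : ℝ} (hac : a ≤ c) (hcd : c ≤ d) (hdb : d ≤ b)
    (hf : IntegrableOn f (Icc a b)) :
    ∫ x in c..d, f x * Real.exp (∫ t in a..x, f t) =
      Real.exp (∫ t in a..d, f t) - Real.exp (∫ t in a..c, f t) := by
  have hsub1 : Icc a c ⊆ Icc a b := Icc_subset_Icc le_rfl (hcd.trans hdb)
  have hsub2 : Icc c d ⊆ Icc a b := Icc_subset_Icc hac hdb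
  have hiac : IntervalIntegrable f volume a c := by
    apply IntegrableOn.intervalIntegrable
    rw [uIcc_of_le hac]; exact hf.mono_set hsub1
  have hicx : ∀ x, c ≤ x → x ≤ d → IntervalIntegrable f volume c x := by
    intro x h1 h2
    apply IntegrableOn.intervalIntegrable
    rw [uIcc_of_le h1]; exact hf.mono_set (Icc_subset_Icc hac (h2.trans hdb))
  have hadj : ∀ x, c ≤ x → x ≤ d → (∫ t in a..x, f t) = (∫ t in a..c, f t) + ∫ t in c..x, f t :=
    fun x h1 h2 => (integral_add_adjacent_intervals hiac (hicx x h1 h2)).symm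
  have h1 : ∫ x in c..d, f x * Real.exp (∫ t in a..x, f t) =
      Real.exp (∫ t in a..c, f t) * ∫ x in c..d, f x * Real.exp (∫ t in c..x, f t) := by
    rw [← intervalIntegral.integral_const_mul]
    apply intervalIntegral.integral_congr
    intro x hx
    rw [uIcc_of_le hcd] at hx
    show f x * Real.exp (∫ t in a..x, f t) = _
    rw [hadj x hx.1 hx.2, Real.exp_add]; ring
  rw [h1, ftc_exp hcd (hf.mono_set hsub2), hadj d hcd le_rfl, Real.exp_add]
  ring

lemma ae_zero_of_forall_integral_Ioc_zero {g : ℝ → ℝ} {a b : ℝ} (hab : a ≤ b)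
    (hg : IntegrableOn g (Icc a b))
    (h : ∀ x ∈ Icc a b, ∫ t in Ioc a x, g t = 0) :
    ∀ᵐ x ∂(volume.restrict (Icc a b)), g x = 0 := by
  set g' := (Icc a b).indicator g with hg'
  have hint : Integrable g' := (integrable_indicator_iff measurableSet_Icc).2 hg
  -- vanishing on Ioc subintervals
  have hIoc : ∀ y ∈ Icc a b, ∫ t in Ioc a y, g' t = 0 := by
    intro y hy
    have : ∀ t ∈ Ioc a y, g' t = g t := by
      intro t ht
      have htm : t ∈ Icc a b := ⟨le_of_lt ht.1, ht.2.trans hy.2⟩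
      rw [hg', indicator_of_mem htm]
    rw [setIntegral_congr_fun measurableSet_Ioc this]
    exact h y hy
  have hIoc2 : ∀ c d, a ≤ c → c ≤ d → d ≤ b → ∫ t in Ioc c d, g' t = 0 := by
    intro c d hac hcd hdb
    have hu : Ioc a c ∪ Ioc c d = Ioc a d := Ioc_union_Ioc_eq_Ioc hac hcd
    have hdisj : Disjoint (Ioc a c) (Ioc c d) := Ioc_disjoint_Ioc_of_le le_rfl
    have hadd := setIntegral_union hdisj measurableSet_Ioc
      (hint.integrableOn) (hint.integrableOn)
    rw [hu] at hadd
    have h1 := hIoc c ⟨hac, hcd.trans hdb⟩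
    have h2 := hIoc d ⟨hac.trans hcd, hdb⟩
    rw [h1] at hadd
    linarith [hadd]
  -- Lebesgue differentiation
  have hld := IsUnifLocDoublingMeasure.ae_tendsto_average (μ := (volume : Measure ℝ))
    hint.locallyIntegrable 1
  have key : ∀ᵐ x ∂(volume : Measure ℝ), x ∈ Ioo a b → g' x = 0 := by
    filter_upwards [hld] with x hx hxI
    have hten := hx (fun _ : ℝ => x) (fun δ : ℝ => δ) (Filter.tendsto_id)
      (by filter_upwards [self_mem_nhdsWithin] with δ (hδ : (0:ℝ) < δ)
          exact Metric.mem_closedBall_self (by linarith))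
    have hev : ∀ᶠ δ in nhdsWithin (0:ℝ) (Ioi 0),
        (⨍ y in Metric.closedBall x δ, g' y) = 0 := by
      have hpos : 0 < min (x - a) (b - x) := by
        simp only [lt_min_iff]; constructor <;> [linarith [hxI.1]; linarith [hxI.2]]
      filter_upwards [Ioo_mem_nhdsGT_of_mem (left_mem_Ico.2 hpos)] with δ hδ
      have h1 : Metric.closedBall x δ = Icc (x - δ) (x + δ) := Real.closedBall_eq_Icc
      have h2 : ∫ y in Metric.closedBall x δ, g' y = 0 := by
        rw [h1, integral_Icc_eq_integral_Ioc]
        exact hIoc2 (x - δ) (x + δ) (by linarith [hδ.2, min_le_left (x-a) (b-x)])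
          (by linarith [hδ.1]) (by linarith [hδ.2, min_le_right (x-a) (b-x)])
      rw [setAverage_eq, h2, smul_zero]
    have : Filter.Tendsto (fun δ : ℝ => ⨍ y in Metric.closedBall x δ, g' y)
        (nhdsWithin (0:ℝ) (Ioi 0)) (nhds 0) := by
      exact Filter.Tendsto.congr' (Filter.EventuallyEq.symm hev) tendsto_const_nhds
    exact tendsto_nhds_unique hten this
  -- transfer to the restricted measure
  have h1 : ∀ᵐ x ∂(volume.restrict (Icc a b)), x ∈ Ioo a b → g' x = 0 :=
    ae_restrict_of_ae key
  have h2 : ∀ᵐ x ∂(volume.restrict (Icc a b)), x ∈ Icc a b :=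
    ae_restrict_mem measurableSet_Icc
  have h3 : ∀ᵐ x ∂(volume.restrict (Icc a b)), x ∉ ({a, b} : Set ℝ) := by
    have : (volume.restrict (Icc a b)) {a, b} = 0 := by
      apply le_antisymm _ zero_le
      calc (volume.restrict (Icc a b)) {a, b} ≤ volume {a, b} :=
            Measure.restrict_le_self _
        _ = 0 := by simp [Set.Finite.measure_zero]
    exact measure_eq_zero_iff_ae_notMem.1 this
  filter_upwards [h1, h2, h3] with x hx1 hx2 hx3
  have hxIoo : x ∈ Ioo a b := by
    rcases lt_or_eq_of_le hx2.1 with h | h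
    · rcases lt_or_eq_of_le hx2.2 with h' | h'
      · exact ⟨h, h'⟩
      · exact absurd (by simp [h']) hx3
    · exact absurd (by simp [← h]) hx3
  have := hx1 hxIoo
  rwa [hg', indicator_of_mem hx2] at this

lemma integral_h' {a p q : ℝ} (ha : 0 < a) (hp : a ≤ p) (hpq : p ≤ q) :
    ∫ x in p..q, (1 - a / x) = (q - a * Real.log q) - (p - a * Real.log p) := by
  have h0 : ∀ x ∈ Set.uIcc p q, HasDerivAt (fun y => y - a * Real.log y) (1 - a / x) x := by
    intro x hx
    rw [Set.uIcc_of_le hpq] at hx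
    have hx0 : x ≠ 0 := by nlinarith [hx.1]
    have h1 := (hasDerivAt_id' x).sub ((Real.hasDerivAt_log hx0).const_mul a)
    rw [div_eq_mul_inv]; exact h1
  have hcont : ContinuousOn (fun x => 1 - a / x) (Set.uIcc p q) := by
    rw [Set.uIcc_of_le hpq]
    exact continuousOn_const.sub (continuousOn_const.div continuousOn_id
      (fun x hx => by nlinarith [hx.1]))
  exact integral_eq_sub_of_hasDerivAt h0 (hcont.intervalIntegrable)


/-- Characterization of the optimal density: under the underlying assumption
(laissez-faire peak exceeds `γ`), the equation
`x* - (α/β) log x* = 1 - γ - (α/β) log x₀` has a solution `x* ∈ [α/β, x₀]`,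
and `f*(x) = 0` for `x ≤ x*`,
`f*(x) = -(1 - α/(βx)) / (γ - (x - x* - (α/β) log (x/x*)))` for `x > x*`
is the unique (up to null sets) minimizer of `G` over `D_γ`. -/
theorem optimal_density_unique_minimizer
    (α β γ ε y₀ x₀ : ℝ) (hα : 0 < α) (hαβ : α < β)
    (hε : ε ∈ Ioo (0:ℝ) 1) (hx₀ : x₀ = 1 - ε) (hy₀ : y₀ = ε)
    (hγ : 0 < γ) (hεγ : ε < γ) (hxb : α / β < x₀)
    (hpeak : γ < 1 + (α / β) * Real.log (α / (β * (1 - ε))) - α / β)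
    (F : (ℝ → ℝ) → ℝ → ℝ)
    (hF : ∀ f x, F f x = ∫ u in (α / β)..x, f u)
    (G : (ℝ → ℝ) → ℝ)
    (hG : ∀ f, G f = ∫ x in Icc (α / β) x₀,
        max (f x + γ⁻¹ * (1 - α / (β * x)) * Real.exp (-(F f x))) 0)
    (D : (ℝ → ℝ) → Prop)
    (hD : ∀ f, D f ↔ (IntegrableOn f (Icc (α / β) x₀) ∧
        F f x₀ = Real.log (y₀ / γ) ∧
        (∀ x ∈ Icc (α / β) x₀, F f x ≤ 0) ∧
        (∀ᵐ x ∂(volume.restrict (Icc (α / β) x₀)),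
          0 ≤ f x + γ⁻¹ * Real.exp (-(F f x))))) :
    ∃ xs ∈ Icc (α / β) x₀,
      xs - (α / β) * Real.log xs = 1 - γ - (α / β) * Real.log x₀ ∧
      ∀ fstar : ℝ → ℝ,
        (∀ x, fstar x = if x ≤ xs then 0
          else -(1 - α / (β * x)) /
            (γ - (x - xs - (α / β) * Real.log (x / xs)))) →
        D fstar ∧ (∀ f, D f → G fstar ≤ G f) ∧
        (∀ f, D f → G f = G fstar →
          f =ᵐ[volume.restrict (Icc (α / β) x₀)] fstar) := by
  have hβ : 0 < β := hα.trans hαβ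
  set a := α / β with ha_def
  have ha : 0 < a := div_pos hα hβ
  have hx₀pos : 0 < x₀ := ha.trans hxb
  have hx₀1 : x₀ < 1 := by rw [hx₀]; linarith [hε.1]
  set h : ℝ → ℝ := fun x => x - a * Real.log x with hh
  set T : ℝ := 1 - γ - a * Real.log x₀ with hT
  have hhcont : ContinuousOn h (Icc a x₀) :=
    continuousOn_id.sub (continuousOn_const.mul (Real.continuousOn_log.mono
      (fun x hx => by simp only [mem_compl_iff, mem_singleton_iff]; nlinarith [hx.1])))
  have hmono : StrictMonoOn h (Icc a x₀) := by
    apply strictMonoOn_of_deriv_pos (convex_Icc a x₀) hhcont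
    intro x hx
    rw [interior_Icc] at hx
    have hx0 : x ≠ 0 := by nlinarith [hx.1]
    have hd : HasDerivAt h (1 - a * x⁻¹) x :=
      (hasDerivAt_id x).sub ((Real.hasDerivAt_log hx0).const_mul a)
    rw [hd.deriv]
    have : a * x⁻¹ < 1 := by
      rw [mul_inv_lt_iff₀ (by nlinarith [hx.1] : (0:ℝ) < x)]
      nlinarith [hx.1]
    linarith
  have hlogdiv : Real.log (a / x₀) = Real.log a - Real.log x₀ :=
    Real.log_div ha.ne' hx₀pos.ne'
  have hpeak' : γ < 1 + a * (Real.log a - Real.log x₀) - a := by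
    have : α / (β * (1 - ε)) = a / x₀ := by rw [hx₀, ha_def, div_div]
    rw [this, hlogdiv] at hpeak
    exact hpeak
  have hTa : h a < T := by
    simp only [hh, hT]
    nlinarith
  have hTb : T < h x₀ := by
    simp only [hh, hT]
    rw [hx₀]
    linarith
  obtain ⟨xs, hxsmem, hxseq⟩ := intermediate_value_Icc hxb.le hhcont ⟨hTa.le, hTb.le⟩
  have hxsa : a < xs := by
    rcases lt_or_eq_of_le hxsmem.1 with h' | h'
    · exact h'
    · exfalso; rw [← h'] at hxseq; rw [hxseq] at hTa; exact lt_irrefl _ hTa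
  have hxsb : xs < x₀ := by
    rcases lt_or_eq_of_le hxsmem.2 with h' | h'
    · exact h'
    · exfalso; rw [h'] at hxseq; rw [hxseq] at hTb; exact lt_irrefl _ hTb
  have hxspos : 0 < xs := ha.trans hxsa
  refine ⟨xs, hxsmem, hxseq, ?_⟩
  intro fstar hfs
  set w : ℝ → ℝ := fun x => γ - (x - xs - a * Real.log (x / xs)) with hw

  have hhx₀xs : h x₀ - h xs = γ - ε := by
    have h1 := hxseq
    simp only [hh, hT] at h1 ⊢
    linarith [h1, hx₀]
  have hwval : ∀ x : ℝ, 0 < x → w x = γ - (h x - h xs) := by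
    intro x hx
    simp only [hw, hh]
    rw [Real.log_div hx.ne' hxspos.ne']
    ring
  have hw_xs : w xs = γ := by
    simp only [hw, div_self hxspos.ne', Real.log_one]; ring
  have hw_ge : ∀ x ∈ Icc xs x₀, ε ≤ w x := by
    intro x hx
    have hxIcc : x ∈ Icc a x₀ := ⟨hxsa.le.trans hx.1, hx.2⟩
    have := hmono.monotoneOn hxIcc (right_mem_Icc.2 hxb.le) hx.2
    rw [hwval x (hxspos.trans_le hx.1)]
    simp only [hh] at this hhx₀xs ⊢
    linarith
  have hw_le : ∀ x ∈ Icc xs x₀, w x ≤ γ := by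
    intro x hx
    have hxsIcc : xs ∈ Icc a x₀ := ⟨hxsa.le, hxsb.le⟩
    have hxIcc : x ∈ Icc a x₀ := ⟨hxsa.le.trans hx.1, hx.2⟩
    have := hmono.monotoneOn hxsIcc hxIcc hx.1
    rw [hwval x (hxspos.trans_le hx.1)]
    simp only [hh] at this ⊢
    linarith
  have hw_x₀ : w x₀ = ε := by rw [hwval x₀ hx₀pos, hhx₀xs]; ring
  -- fstar in terms of a/x
  have hfs' : ∀ x : ℝ, fstar x = if x ≤ xs then 0 else -(1 - a / x) / (w x) := by
    intro x
    rw [hfs x, ha_def, div_div]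
  -- continuity of q on Icc xs x₀
  set q : ℝ → ℝ := fun u => -(1 - a / u) / (w u) with hq
  have hlogcont : ContinuousOn (fun x : ℝ => Real.log (x / xs)) (Icc xs x₀) := by
    apply ContinuousOn.comp Real.continuousOn_log (continuousOn_id.div_const xs)
    intro x hx
    simp only [mem_compl_iff, mem_singleton_iff, id_eq]
    exact div_ne_zero (hxspos.trans_le hx.1).ne' hxspos.ne'
  have hwcont : ContinuousOn w (Icc xs x₀) := by
    apply continuousOn_const.sub
    exact ((continuousOn_id.sub continuousOn_const).sub (continuousOn_const.mul hlogcont))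
  have hwne : ∀ x ∈ Icc xs x₀, w x ≠ 0 := fun x hx =>
    (lt_of_lt_of_le hε.1 (hw_ge x hx)).ne'
  have hqcont : ContinuousOn q (Icc xs x₀) := by
    apply ContinuousOn.div
    · exact (continuousOn_const.sub (continuousOn_const.div continuousOn_id
        (fun x hx => (hxspos.trans_le hx.1).ne'))).neg
    · exact hwcont
    · exact hwne
  -- integrability of fstar
  have hfs_int : IntegrableOn fstar (Icc a x₀) := by
    have h1 : IntegrableOn fstar (Icc a xs) := by
      apply (integrableOn_congr_fun (fun x hx => (hfs' x).trans (if_pos hx.2))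
        measurableSet_Icc).2
      exact integrableOn_zero
    have h2 : IntegrableOn fstar (Icc xs x₀) := by
      apply (hqcont.integrableOn_Icc).congr
      have hsingle : (volume.restrict (Icc xs x₀)) {xs} = 0 :=
        le_antisymm (le_trans (Measure.restrict_le_self _) (by simp)) zero_le
      filter_upwards [measure_eq_zero_iff_ae_notMem.1 hsingle,
        ae_restrict_mem measurableSet_Icc] with x hx1 hx2
      have : xs < x := lt_of_le_of_ne hx2.1 (fun hc => hx1 (by simp [← hc]))
      rw [hfs' x, if_neg (not_le.2 this)]
    exact (h1.union h2).mono_set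
      (by rw [Icc_union_Icc_eq_Icc hxsa.le hxsb.le])
  -- the primitive of fstar
  have hFs_zero : ∀ x ∈ Icc a x₀, x ≤ xs → (∫ t in a..x, fstar t) = 0 := by
    intro x hx hxxs
    have : ∀ t ∈ uIcc a x, fstar t = 0 := by
      intro t ht
      rw [uIcc_of_le hx.1] at ht
      rw [hfs' t, if_pos (ht.2.trans hxxs)]
    rw [intervalIntegral.integral_congr this]
    simp
  have hFs_log : ∀ x ∈ Icc a x₀, xs < x → (∫ t in a..x, fstar t) = Real.log (w x / γ) := by
    intro x hx hxsx
    have hx1 : IntervalIntegrable fstar volume a xs := by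
      apply IntegrableOn.intervalIntegrable
      rw [uIcc_of_le hxsa.le]
      exact hfs_int.mono_set (Icc_subset_Icc le_rfl hxsb.le)
    have hx2 : IntervalIntegrable fstar volume xs x := by
      apply IntegrableOn.intervalIntegrable
      rw [uIcc_of_le hxsx.le]
      exact hfs_int.mono_set (Icc_subset_Icc hxsa.le hx.2)
    rw [← intervalIntegral.integral_add_adjacent_intervals hx1 hx2,
      hFs_zero xs ⟨hxsa.le, hxsb.le⟩ le_rfl, zero_add]
    -- ∫ xs..x fstar = ∫ xs..x q
    have hcongr : (∫ t in xs..x, fstar t) = ∫ t in xs..x, q t := by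
      rw [intervalIntegral.integral_of_le hxsx.le, intervalIntegral.integral_of_le hxsx.le]
      apply setIntegral_congr_fun measurableSet_Ioc
      intro t ht
      rw [hfs' t, if_neg (not_le.2 ht.1)]
    rw [hcongr]
    -- FTC
    have hderiv : ∀ u ∈ uIcc xs x, HasDerivAt (fun v => Real.log (w v)) (q u) u := by
      intro u hu
      rw [uIcc_of_le hxsx.le] at hu
      have huIcc : u ∈ Icc xs x₀ := ⟨hu.1, hu.2.trans hx.2⟩
      have hu0 : 0 < u := hxspos.trans_le hu.1
      have hlog : HasDerivAt (fun v : ℝ => Real.log (v / xs)) (1 / u) u := by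
        have h1 : HasDerivAt (fun v : ℝ => v / xs) (1 / xs) u := by
          simpa using (hasDerivAt_id u).div_const xs
        have h2 := (Real.hasDerivAt_log (div_ne_zero hu0.ne' hxspos.ne')).comp u h1
        refine h2.congr_deriv ?_
        rw [inv_div, div_mul_div_comm, mul_one, mul_comm u xs, div_mul_eq_div_div, div_self hxspos.ne']
      have hwd : HasDerivAt w (-(1 - a / u)) u := by
        have h3 := (((hasDerivAt_id u).sub_const xs).sub (hlog.const_mul a)).const_sub γ
        refine h3.congr_deriv ?_
        rw [mul_one_div]
      simpa [hq] using hwd.log (hwne u huIcc)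
    rw [intervalIntegral.integral_eq_sub_of_hasDerivAt hderiv
      (by apply IntegrableOn.intervalIntegrable
          rw [uIcc_of_le hxsx.le]
          exact (hqcont.mono (Icc_subset_Icc le_rfl hx.2)).integrableOn_Icc)]
    rw [hw_xs, Real.log_div (hwne x ⟨hxsx.le, hx.2⟩) hγ.ne']
  -- F fstar description
  have hFfs : ∀ x ∈ Icc a x₀, F fstar x = if x ≤ xs then 0 else Real.log (w x / γ) := by
    intro x hx
    rw [hF]
    split_ifs with hc
    · exact hFs_zero x hx hc
    · exact hFs_log x hx (not_le.1 hc)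
  have hx₀mem : x₀ ∈ Icc a x₀ := right_mem_Icc.2 hxb.le
  have hwpos : ∀ x ∈ Icc xs x₀, 0 < w x := fun x hx => lt_of_lt_of_le hε.1 (hw_ge x hx)
  have hD1 : F fstar x₀ = Real.log (y₀ / γ) := by
    rw [hFfs x₀ hx₀mem, if_neg (not_le.2 hxsb), hw_x₀, hy₀]
  have hD2 : ∀ x ∈ Icc a x₀, F fstar x ≤ 0 := by
    intro x hx
    rw [hFfs x hx]
    split_ifs with hc
    · exact le_rfl
    · apply Real.log_nonpos
      · exact div_nonneg (hwpos x ⟨(not_le.1 hc).le, hx.2⟩).le hγ.le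
      · rw [div_le_one hγ]
        exact hw_le x ⟨(not_le.1 hc).le, hx.2⟩
  have hexpneg : ∀ x ∈ Icc a x₀, xs < x → Real.exp (-(F fstar x)) = γ / w x := by
    intro x hx hxsx
    rw [hFfs x hx, if_neg (not_le.2 hxsx), Real.exp_neg,
      Real.exp_log (div_pos (hwpos x ⟨hxsx.le, hx.2⟩) hγ), inv_div]
  have hD3 : ∀ x ∈ Icc a x₀, 0 ≤ fstar x + γ⁻¹ * Real.exp (-(F fstar x)) := by
    intro x hx
    rcases le_or_gt x xs with hc | hc
    · rw [hfs' x, if_pos hc, hFfs x hx, if_pos hc]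
      simp only [neg_zero, Real.exp_zero, mul_one, zero_add]
      positivity
    · have hxpos : 0 < x := ha.trans_le hx.1
      have hw0 : 0 < w x := hwpos x ⟨hc.le, hx.2⟩
      rw [hfs' x, if_neg (not_le.2 hc), hexpneg x hx hc]
      have : -(1 - a / x) / w x + γ⁻¹ * (γ / w x) = (a / x) / w x := by
        field_simp
        ring
      rw [this]
      positivity
  have hDfstar : D fstar := (hD fstar).2 ⟨hfs_int, hD1, hD2,
    by filter_upwards [ae_restrict_mem measurableSet_Icc] with x hx using hD3 x hx⟩
  -- value of G fstar
  have hGfs : G fstar = γ⁻¹ * (h xs - h a) := by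
    rw [hG fstar]
    have hcongr : EqOn (fun x => max (fstar x + γ⁻¹ * (1 - α / (β * x)) *
        Real.exp (-(F fstar x))) 0) (fun x => if x ≤ xs then γ⁻¹ * (1 - a / x) else 0)
        (Icc a x₀) := by
      intro x hx
      have hxpos : 0 < x := ha.trans_le hx.1
      have hax : α / (β * x) = a / x := by rw [ha_def, div_div]
      simp only
      split_ifs with hc
      · rw [hfs' x, if_pos hc, hFfs x hx, if_pos hc, hax]
        simp only [neg_zero, Real.exp_zero, mul_one, zero_add]
        apply max_eq_left
        have h1x : 0 ≤ 1 - a / x := by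
          rw [sub_nonneg]
          exact (div_le_one hxpos).2 hx.1
        positivity
      · have hw0 : 0 < w x := hwpos x ⟨(not_le.1 hc).le, hx.2⟩
        rw [hfs' x, if_neg hc, hexpneg x hx (not_le.1 hc), hax]
        have : -(1 - a / x) / w x + γ⁻¹ * (1 - a / x) * (γ / w x) = 0 := by
          field_simp
          ring
        rw [this, max_self]
    rw [setIntegral_congr_fun measurableSet_Icc hcongr]
    have hsplit : Icc a x₀ = Icc a xs ∪ Ioc xs x₀ := (Icc_union_Ioc_eq_Icc hxsa.le hxsb.le).symm
    have hdisj : Disjoint (Icc a xs) (Ioc xs x₀) :=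
      disjoint_left.2 fun x hx1 hx2 => absurd hx1.2 (not_le.2 hx2.1)
    have hint1 : IntegrableOn (fun x => if x ≤ xs then γ⁻¹ * (1 - a / x) else 0)
        (Icc a xs) := by
      apply (integrableOn_congr_fun (g := fun x => if x ≤ xs then γ⁻¹ * (1 - a / x) else 0)
        (f := fun x => γ⁻¹ * (1 - a / x)) (fun x hx => (if_pos hx.2).symm)
        measurableSet_Icc).1
      apply ContinuousOn.integrableOn_Icc
      exact continuousOn_const.mul (continuousOn_const.sub (continuousOn_const.div
        continuousOn_id (fun x hx => (ha.trans_le hx.1).ne')))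
    have hint2 : IntegrableOn (fun x => if x ≤ xs then γ⁻¹ * (1 - a / x) else 0)
        (Ioc xs x₀) := by
      apply (integrableOn_congr_fun (f := fun _ => (0:ℝ))
        (fun x hx => (if_neg (not_le.2 hx.1)).symm) measurableSet_Ioc).1
      exact integrableOn_zero
    rw [hsplit, setIntegral_union hdisj measurableSet_Ioc hint1 hint2]
    have e2 : ∫ x in Ioc xs x₀, (fun x => if x ≤ xs then γ⁻¹ * (1 - a / x) else 0) x = 0 := by
      rw [setIntegral_congr_fun measurableSet_Ioc
        (fun x hx => (if_neg (not_le.2 hx.1) : _))]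
      simp
    have e1 : ∫ x in Icc a xs, (fun x => if x ≤ xs then γ⁻¹ * (1 - a / x) else 0) x =
        γ⁻¹ * (h xs - h a) := by
      rw [setIntegral_congr_fun measurableSet_Icc
        (fun x hx => (if_pos hx.2 : _))]
      rw [integral_Icc_eq_integral_Ioc, ← intervalIntegral.integral_of_le hxsa.le]
      rw [intervalIntegral.integral_const_mul, integral_h' ha le_rfl hxsa.le]
    rw [e1, e2, add_zero]
  -- relation to the lower-bound constant
  have hGval2 : γ⁻¹ * (h xs - h a) = ε/γ - 1 + γ⁻¹ * (h x₀ - h a) := by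
    have e1 : γ⁻¹ * γ = 1 := inv_mul_cancel₀ hγ.ne'
    have e2 : h xs - h a = (h x₀ - h a) - (γ - ε) := by linarith [hhx₀xs]
    rw [e2, div_eq_mul_inv]
    ring_nf
    nlinarith [e1]
  -- ============ Part 3 : lower bound and uniqueness ============
  have hmain : ∀ f, D f → G fstar ≤ G f ∧
      (G f = G fstar → f =ᵐ[volume.restrict (Icc a x₀)] fstar) := by
    intro f hDf
    obtain ⟨hfi, hFx₀, hFle, hae⟩ := (hD f).1 hDf
    set Φ : ℝ → ℝ := fun x => Real.exp (F f x) with hΦ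
    have hΦpos : ∀ x, 0 < Φ x := fun x => Real.exp_pos _
    have hFa : F f a = 0 := by rw [hF]; exact intervalIntegral.integral_same
    have hΦa : Φ a = 1 := by rw [hΦ]; simp [hFa]
    have hεγpos : 0 < ε / γ := div_pos hε.1 hγ
    have hΦx₀ : Φ x₀ = ε / γ := by
      rw [hΦ]; simp only; rw [hFx₀, hy₀, Real.exp_log hεγpos]
    have hΦle1 : ∀ x ∈ Icc a x₀, Φ x ≤ 1 := by
      intro x hx
      rw [hΦ]; simp only
      exact Real.exp_le_one_iff.2 (hFle x hx)
    have hcontF : ContinuousOn (F f) (Icc a x₀) := by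
      apply ContinuousOn.congr (continuousOn_primitive (μ := volume) hfi)
      intro x hx
      rw [hF, intervalIntegral.integral_of_le hx.1]
    have hcontΦ : ContinuousOn Φ (Icc a x₀) :=
      Real.continuous_exp.comp_continuousOn hcontF
    obtain ⟨C, hC⟩ := isCompact_Icc.exists_bound_of_continuousOn hcontΦ
    set L : ℝ → ℝ := fun x => f x * Φ x + γ⁻¹ * (1 - a / x) with hL
    set ν : ℝ → ℝ := fun x => γ⁻¹ * (1 - α / (β * x)) * Real.exp (-(F f x)) with hν
    have hνcont : ContinuousOn ν (Icc a x₀) := by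
      apply ContinuousOn.mul
      · apply continuousOn_const.mul
        apply continuousOn_const.sub
        exact continuousOn_const.div (continuousOn_const.mul continuousOn_id)
          (fun x hx => mul_ne_zero hβ.ne' (ha.trans_le hx.1).ne')
      · exact Real.continuous_exp.comp_continuousOn hcontF.neg
    have hfΦint : IntegrableOn (fun x => f x * Φ x) (Icc a x₀) := by
      have := Integrable.bdd_mul (c := C) hfi
        (hcontΦ.aestronglyMeasurable measurableSet_Icc)
        (by filter_upwards [ae_restrict_mem measurableSet_Icc] with x hx using hC x hx)
      apply this.congr
      filter_upwards with x using mul_comm _ _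
    have hratcont : ContinuousOn (fun x : ℝ => γ⁻¹ * (1 - a / x)) (Icc a x₀) :=
      continuousOn_const.mul (continuousOn_const.sub (continuousOn_const.div
        continuousOn_id (fun x hx => (ha.trans_le hx.1).ne')))
    have hLint : IntegrableOn L (Icc a x₀) :=
      hfΦint.add hratcont.integrableOn_Icc
    have hMint : IntegrableOn
        (fun x => max (f x + γ⁻¹ * (1 - α / (β * x)) * Real.exp (-(F f x))) 0)
        (Icc a x₀) := (hfi.add hνcont.integrableOn_Icc).pos_part
    have hkey : ∀ x ∈ Icc a x₀,
        f x + γ⁻¹ * (1 - α / (β * x)) * Real.exp (-(F f x)) =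
          Real.exp (-(F f x)) * L x := by
      intro x hx
      have hax : α / (β * x) = a / x := by rw [ha_def, div_div]
      have hexpΦ : Real.exp (-(F f x)) * Φ x = 1 := by
        rw [hΦ]; simp only; rw [← Real.exp_add]; simp
      calc f x + γ⁻¹ * (1 - α / (β * x)) * Real.exp (-(F f x))
          = f x * (Real.exp (-(F f x)) * Φ x) +
            γ⁻¹ * (1 - α / (β * x)) * Real.exp (-(F f x)) := by rw [hexpΦ]; ring
        _ = Real.exp (-(F f x)) * L x := by rw [hL, hax]; ring
    have hMeq : ∀ x ∈ Icc a x₀,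
        max (f x + γ⁻¹ * (1 - α / (β * x)) * Real.exp (-(F f x))) 0 =
          Real.exp (-(F f x)) * max (L x) 0 := by
      intro x hx
      rw [hkey x hx, mul_max_of_nonneg _ _ (Real.exp_pos _).le, mul_zero]
    have hML : ∀ x ∈ Icc a x₀, L x ≤
        max (f x + γ⁻¹ * (1 - α / (β * x)) * Real.exp (-(F f x))) 0 := by
      intro x hx
      rw [hMeq x hx]
      have h1 : (1:ℝ) ≤ Real.exp (-(F f x)) :=
        Real.one_le_exp (by linarith [hFle x hx])
      calc L x ≤ max (L x) 0 := le_max_left _ _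
        _ = 1 * max (L x) 0 := (one_mul _).symm
        _ ≤ Real.exp (-(F f x)) * max (L x) 0 :=
            mul_le_mul_of_nonneg_right h1 (le_max_right _ _)
    -- value of ∫ L
    have hfΦval : ∫ x in Icc a x₀, f x * Φ x = ε / γ - 1 := by
      rw [integral_Icc_eq_integral_Ioc, ← intervalIntegral.integral_of_le hxb.le]
      have hcongr : ∀ x ∈ uIcc a x₀, f x * Φ x = f x * Real.exp (∫ t in a..x, f t) := by
        intro x hx
        rw [hΦ]; simp only [hF]
      rw [intervalIntegral.integral_congr hcongr, ftc_exp hxb.le hfi, ← hF, hFx₀, hy₀,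
        Real.exp_log hεγpos]
    have hratval : ∫ x in Icc a x₀, γ⁻¹ * (1 - a / x) = γ⁻¹ * (h x₀ - h a) := by
      rw [integral_Icc_eq_integral_Ioc, ← intervalIntegral.integral_of_le hxb.le,
        intervalIntegral.integral_const_mul, integral_h' ha le_rfl hxb.le]
    have hLval : ∫ x in Icc a x₀, L x = ε / γ - 1 + γ⁻¹ * (h x₀ - h a) := by
      rw [hL, integral_add hfΦint hratcont.integrableOn_Icc, hfΦval, hratval]
    have hlow : G fstar ≤ G f := by
      rw [hG f, hGfs, hGval2, ← hLval]
      exact setIntegral_mono_on hLint hMint measurableSet_Icc hML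
    refine ⟨hlow, ?_⟩
    intro hGeq
    -- equality of the two integrals
    have hIM : ∫ x in Icc a x₀,
        max (f x + γ⁻¹ * (1 - α / (β * x)) * Real.exp (-(F f x))) 0 =
        ∫ x in Icc a x₀, L x := by
      rw [← hG f, hGeq, hGfs, hGval2, hLval]
    have hMLae : ∀ᵐ x ∂(volume.restrict (Icc a x₀)),
        max (f x + γ⁻¹ * (1 - α / (β * x)) * Real.exp (-(F f x))) 0 - L x = 0 := by
      have hsub : ∫ x in Icc a x₀,
          (max (f x + γ⁻¹ * (1 - α / (β * x)) * Real.exp (-(F f x))) 0 - L x) = 0 := by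
        rw [integral_sub hMint hLint, hIM, sub_self]
      have hnn : 0 ≤ᵐ[volume.restrict (Icc a x₀)]
          fun x => max (f x + γ⁻¹ * (1 - α / (β * x)) * Real.exp (-(F f x))) 0 - L x := by
        filter_upwards [ae_restrict_mem measurableSet_Icc] with x hx
        exact sub_nonneg.2 (hML x hx)
      exact (MeasureTheory.integral_eq_zero_iff_of_nonneg_ae hnn (hMint.sub hLint)).1 hsub
    have hLprop : ∀ᵐ x ∂(volume.restrict (Icc a x₀)),
        0 ≤ L x ∧ (L x = 0 ∨ F f x = 0) := by
      filter_upwards [hMLae, ae_restrict_mem measurableSet_Icc] with x hxe hxm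
      rw [hMeq x hxm, sub_eq_zero] at hxe
      have hLge : 0 ≤ L x := by
        by_contra hneg
        push_neg at hneg
        rw [max_eq_right hneg.le, mul_zero] at hxe
        exact absurd hxe.symm (ne_of_lt hneg)
      refine ⟨hLge, ?_⟩
      rcases eq_or_lt_of_le hLge with h0 | h0
      · exact Or.inl h0.symm
      · right
        rw [max_eq_left hLge] at hxe
        have hexp1 : Real.exp (-(F f x)) = 1 :=
          mul_right_cancel₀ h0.ne' (by rw [hxe, one_mul])
        have := (Real.exp_eq_one_iff _).1 hexp1
        linarith [this]
    -- the key computation on intervals where Φ < 1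
    have hKey : ∀ p q, a ≤ p → p ≤ q → q ≤ x₀ → (∀ x ∈ Ioo p q, Φ x < 1) →
        Φ q - Φ p = -(γ⁻¹ * (h q - h p)) := by
      intro p q hap hpq hqx₀ hΦlt
      have hIocsub : Ioc p q ⊆ Icc a x₀ :=
        fun x hx => ⟨hap.trans hx.1.le, hx.2.trans hqx₀⟩
      have hftc : ∫ x in p..q, f x * Φ x = Φ q - Φ p := by
        have hcongr : ∀ x ∈ uIcc p q, f x * Φ x =
            f x * Real.exp (∫ t in a..x, f t) := by
          intro x hx
          rw [hΦ]; simp only [hF]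
        rw [intervalIntegral.integral_congr hcongr, ftc_exp_sub hap hpq hqx₀ hfi, hΦ]
        simp only [hF]
      have hsingq : (volume.restrict (Ioc p q)) {q} = 0 :=
        le_antisymm (le_trans (Measure.restrict_le_self _) (by simp)) zero_le
      have hLz : ∀ᵐ x ∂volume.restrict (Ioc p q), L x = 0 := by
        filter_upwards [ae_restrict_of_ae_restrict_of_subset hIocsub hLprop,
          ae_restrict_mem measurableSet_Ioc,
          measure_eq_zero_iff_ae_notMem.1 hsingq] with x h1 h2 h3
        rcases h1.2 with h | h
        · exact h
        · exfalso
          have hxIoo : x ∈ Ioo p q :=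
            ⟨h2.1, lt_of_le_of_ne h2.2 (fun hc => h3 (by simp [hc]))⟩
          have := hΦlt x hxIoo
          rw [hΦ] at this; simp only at this
          rw [h] at this
          simp at this
      have hLzero : ∫ x in p..q, L x = 0 := by
        rw [intervalIntegral.integral_of_le hpq]
        exact integral_eq_zero_of_ae hLz
      have hLi : IntervalIntegrable L volume p q := by
        apply IntegrableOn.intervalIntegrable
        rw [uIcc_of_le hpq]
        exact hLint.mono_set (Icc_subset_Icc hap hqx₀)
      have hrati : IntervalIntegrable (fun x => γ⁻¹ * (1 - a / x)) volume p q := by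
        apply IntegrableOn.intervalIntegrable
        rw [uIcc_of_le hpq]
        exact hratcont.integrableOn_Icc.mono_set (Icc_subset_Icc hap hqx₀)
      have hratval' : ∫ x in p..q, γ⁻¹ * (1 - a / x) = γ⁻¹ * (h q - h p) := by
        rw [intervalIntegral.integral_const_mul, integral_h' ha hap hpq]
      have hsplit : ∫ x in p..q, f x * Φ x =
          (∫ x in p..q, L x) - ∫ x in p..q, γ⁻¹ * (1 - a / x) := by
        rw [← intervalIntegral.integral_sub hLi hrati]
        apply intervalIntegral.integral_congr
        intro x hx
        simp only [hL]
        ring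
      rw [hftc, hLzero, hratval', zero_sub] at hsplit
      exact hsplit
    -- the contact set and its supremum
    set S : Set ℝ := Icc a x₀ ∩ Φ ⁻¹' {1} with hS
    have hScl : IsClosed S :=
      hcontΦ.preimage_isClosed_of_isClosed isClosed_Icc isClosed_singleton
    have haS : a ∈ S := ⟨left_mem_Icc.2 hxb.le, by simp [hΦa]⟩
    have hSbdd : BddAbove S := bddAbove_Icc.mono inter_subset_left
    set c := sSup S with hc
    have hcS : c ∈ S := hScl.csSup_mem ⟨a, haS⟩ hSbdd
    have hca : a ≤ c := hcS.1.1
    have hcx₀ : c ≤ x₀ := hcS.1.2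
    have hΦc : Φ c = 1 := hcS.2
    have hlt : ∀ x, c < x → x ≤ x₀ → Φ x < 1 := by
      intro x hcx hxx₀
      have hxmem : x ∈ Icc a x₀ := ⟨hca.trans hcx.le, hxx₀⟩
      refine lt_of_le_of_ne (hΦle1 x hxmem) (fun hc1 => ?_)
      exact absurd (le_csSup hSbdd ⟨hxmem, by simp [hc1]⟩) (not_le.2 hcx)
    -- c = xs
    have e1 : γ⁻¹ * γ = 1 := inv_mul_cancel₀ hγ.ne'
    have hceq : c = xs := by
      have h1 := hKey c x₀ hca hcx₀ le_rfl (fun x hx => hlt x hx.1 hx.2.le)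
      rw [hΦx₀, hΦc] at h1
      have h2 : h c = h xs := by
        linear_combination (-γ) * h1 + (h x₀ - h c + ε) * e1 + hhx₀xs
      exact hmono.injOn ⟨hca, hcx₀⟩ ⟨hxsa.le, hxsb.le⟩ h2
    have hΦxs : Φ xs = 1 := hceq ▸ hΦc
    -- Φ = 1 on [a, xs]
    have hΦ1 : ∀ x ∈ Icc a xs, Φ x = 1 := by
      by_contra hcon
      push_neg at hcon
      obtain ⟨x₁, hx₁mem, hx₁ne⟩ := hcon
      have hx₁Icc : x₁ ∈ Icc a x₀ := ⟨hx₁mem.1, hx₁mem.2.trans hxsb.le⟩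
      have hx₁lt : Φ x₁ < 1 := lt_of_le_of_ne (hΦle1 _ hx₁Icc) hx₁ne
      have hx₁a : a < x₁ :=
        lt_of_le_of_ne hx₁mem.1 (fun hc' => by rw [← hc', hΦa] at hx₁lt; linarith)
      have hx₁xs : x₁ < xs :=
        lt_of_le_of_ne hx₁mem.2 (fun hc' => by rw [hc', hΦxs] at hx₁lt; linarith)
      set Se : Set ℝ := Icc x₁ xs ∩ Φ ⁻¹' {1} with hSe
      have hSecl : IsClosed Se :=
        (hcontΦ.mono (Icc_subset_Icc hx₁mem.1 hxsb.le)).preimage_isClosed_of_isClosed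
          isClosed_Icc isClosed_singleton
      have hxsSe : xs ∈ Se := ⟨right_mem_Icc.2 hx₁xs.le, by simp [hΦxs]⟩
      have hSebdd : BddBelow Se := bddBelow_Icc.mono inter_subset_left
      set e := sInf Se with he
      have heSe : e ∈ Se := hSecl.csInf_mem ⟨xs, hxsSe⟩ hSebdd
      have hΦe : Φ e = 1 := heSe.2
      have hx₁e : x₁ < e :=
        lt_of_le_of_ne heSe.1.1 (fun hc' => by rw [hc', hΦe] at hx₁lt; linarith)
      set Sd : Set ℝ := Icc a x₁ ∩ Φ ⁻¹' {1} with hSd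
      have hSdcl : IsClosed Sd :=
        (hcontΦ.mono (Icc_subset_Icc le_rfl hx₁Icc.2)).preimage_isClosed_of_isClosed
          isClosed_Icc isClosed_singleton
      have haSd : a ∈ Sd := ⟨left_mem_Icc.2 hx₁a.le, by simp [hΦa]⟩
      have hSdbdd : BddAbove Sd := bddAbove_Icc.mono inter_subset_left
      set d := sSup Sd with hd
      have hdSd : d ∈ Sd := hSdcl.csSup_mem ⟨a, haSd⟩ hSdbdd
      have hΦd : Φ d = 1 := hdSd.2
      have hdx₁ : d < x₁ :=
        lt_of_le_of_ne hdSd.1.2 (fun hc' => by rw [← hc', hΦd] at hx₁lt; linarith)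
      have hde : d < e := hdx₁.trans hx₁e
      have hdmem : d ∈ Icc a x₀ := ⟨hdSd.1.1, hdSd.1.2.trans hx₁Icc.2⟩
      have hemem : e ∈ Icc a x₀ := ⟨hx₁mem.1.trans heSe.1.1, heSe.1.2.trans hxsb.le⟩
      have hmid : ∀ x ∈ Ioo d e, Φ x < 1 := by
        intro x hx
        have hxIcc : x ∈ Icc a x₀ := ⟨hdmem.1.trans hx.1.le, hx.2.le.trans hemem.2⟩
        refine lt_of_le_of_ne (hΦle1 x hxIcc) (fun hc1 => ?_)
        rcases le_or_gt x x₁ with hcase | hcase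
        · have hxSd : x ∈ Sd := ⟨⟨hxIcc.1, hcase⟩, by simp [hc1]⟩
          exact absurd (le_csSup hSdbdd hxSd) (not_le.2 hx.1)
        · have hxSe : x ∈ Se := ⟨⟨hcase.le, hx.2.le.trans heSe.1.2⟩, by simp [hc1]⟩
          exact absurd (csInf_le hSebdd hxSe) (not_le.2 hx.2)
      have hkde := hKey d e hdmem.1 hde.le hemem.2 hmid
      rw [hΦd, hΦe, sub_self] at hkde
      have hhde : h d < h e := hmono hdmem hemem hde
      have : 0 < γ⁻¹ * (h e - h d) := mul_pos (inv_pos.2 hγ) (sub_pos.2 hhde)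
      linarith
    -- Φ = w/γ on [xs, x₀]
    have hΦ2 : ∀ x ∈ Icc xs x₀, Φ x = w x / γ := by
      intro x hx
      rcases eq_or_lt_of_le hx.1 with heq' | hlt'
      · rw [← heq', hΦxs, hw_xs, div_self hγ.ne']
      · have hk := hKey xs x hxsa.le hlt'.le hx.2
          (fun y hy => hlt y (by rw [hceq]; exact hy.1) (hy.2.le.trans hx.2))
        rw [hΦxs] at hk
        have hxpos : 0 < x := ha.trans_le (hxsa.le.trans hx.1)
        rw [hwval x hxpos, eq_div_iff hγ.ne']
        linear_combination γ * hk - (h x - h xs) * e1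
    -- F f = F fstar on Icc
    have hFeq : ∀ x ∈ Icc a x₀, F f x = F fstar x := by
      intro x hx
      have hlogΦ : F f x = Real.log (Φ x) := by rw [hΦ]; simp [Real.log_exp]
      rw [hFfs x hx]
      split_ifs with hc'
      · rw [hlogΦ, hΦ1 x ⟨hx.1, hc'⟩, Real.log_one]
      · rw [hlogΦ, hΦ2 x ⟨(not_le.1 hc').le, hx.2⟩]
    -- conclude
    have hdiffint : IntegrableOn (fun x => f x - fstar x) (Icc a x₀) := hfi.sub hfs_int
    have hIoczero : ∀ x ∈ Icc a x₀, ∫ t in Ioc a x, (f t - fstar t) = 0 := by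
      intro x hx
      rw [← intervalIntegral.integral_of_le hx.1]
      have i1 : IntervalIntegrable f volume a x := by
        apply IntegrableOn.intervalIntegrable
        rw [uIcc_of_le hx.1]
        exact hfi.mono_set (Icc_subset_Icc le_rfl hx.2)
      have i2 : IntervalIntegrable fstar volume a x := by
        apply IntegrableOn.intervalIntegrable
        rw [uIcc_of_le hx.1]
        exact hfs_int.mono_set (Icc_subset_Icc le_rfl hx.2)
      rw [intervalIntegral.integral_sub i1 i2, ← hF, ← hF, hFeq x hx, sub_self]
    have hfin := ae_zero_of_forall_integral_Ioc_zero hxb.le hdiffint hIoczero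
    filter_upwards [hfin] with x hx
    exact sub_eq_zero.1 hx
  exact ⟨hDfstar, fun f hDf => (hmain f hDf).1, fun f hDf hGeq => (hmain f hDf).2 hGeq⟩
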